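/- Let ρ be a density matrix on ℂ² ⊗ ℂ² with purity Tr(ρ²) > 1/2. Then the largest eigenvalue of ρ exceeds 1/2, and consequently ρ ∉ 𝔄𝔉₂. In other words, no state of 𝔄𝔉₂ has purity exceeding 1/2. -/

import Mathlib

open Matrix Kronecker Complex
open scoped ComplexOrder

/-- The canonical maximally entangled vector `|ψ⁺⟩ = (1/√d) ∑ᵢ |ii⟩` on `ℂ^d ⊗ ℂ^d`. -/
noncomputable def psiPlus (d : ℕ) : (Fin d × Fin d) → ℂ :=
  fun p => if p.1 = p.2 then ((Real.sqrt d)⁻¹ : ℝ) else 0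

/-- The fully entangled fraction: the supremum over `d × d` unitaries `V` of
`⟨ψ⁺| (I ⊗ V)† ρ (I ⊗ V) |ψ⁺⟩`. -/
noncomputable def fef (d : ℕ) (ρ : Matrix (Fin d × Fin d) (Fin d × Fin d) ℂ) : ℝ :=
  ⨆ V : Matrix.unitaryGroup (Fin d) ℂ,
    (star (psiPlus d) ⬝ᵥ
      ((((1 : Matrix (Fin d) (Fin d) ℂ) ⊗ₖ (V : Matrix (Fin d) (Fin d) ℂ))ᴴ * ρ *
        ((1 : Matrix (Fin d) (Fin d) ℂ) ⊗ₖ (V : Matrix (Fin d) (Fin d) ℂ))) *ᵥ psiPlus d)).re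

/-- A density matrix: positive semidefinite with unit trace. -/
def IsDensityMatrix {n : Type*} [Fintype n] (ρ : Matrix n n ℂ) : Prop :=
  ρ.PosSemidef ∧ ρ.trace = 1

/-- `ρ` has absolute fully entangled fraction: `F(UρU†) ≤ 1/d` for every unitary `U`. -/
def AbsFEF (d : ℕ) (ρ : Matrix (Fin d × Fin d) (Fin d × Fin d) ℂ) : Prop :=
  ∀ U ∈ Matrix.unitaryGroup (Fin d × Fin d) ℂ, fef d (U * ρ * Uᴴ) ≤ 1 / d

/-- Basis vector `|ij⟩` of `ℂ^d ⊗ ℂ^d`. -/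
def ket (d : ℕ) (i j : Fin d) : (Fin d × Fin d) → ℂ :=
  fun p => if p = (i, j) then 1 else 0

/-- Rank-one projector `|v⟩⟨v|`. -/
def proj {n : Type*} (v : n → ℂ) : Matrix n n ℂ :=
  Matrix.vecMulVec v (star v)

/- ### Auxiliary lemmas -/

lemma quad_conj {n : Type*} [Fintype n] (M σ : Matrix n n ℂ) (x : n → ℂ) :
    star x ⬝ᵥ (Mᴴ * σ * M) *ᵥ x = star (M *ᵥ x) ⬝ᵥ σ *ᵥ (M *ᵥ x) := by
  rw [← mulVec_mulVec, ← mulVec_mulVec, dotProduct_mulVec, star_mulVec]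

lemma kron_conjT {m n : Type*} [Fintype m] [Fintype n] (A : Matrix m m ℂ) (B : Matrix n n ℂ) :
    (A ⊗ₖ B)ᴴ = Aᴴ ⊗ₖ Bᴴ := by
  ext ⟨a,b⟩ ⟨c,d⟩
  simp [conjTranspose_apply, kroneckerMap_apply]

lemma psi_norm : star (psiPlus 2) ⬝ᵥ psiPlus 2 = 1 := by
  simp [psiPlus, dotProduct, Fintype.sum_prod_type, Fin.sum_univ_two, Complex.ext_iff]
  norm_num [div_mul_div_comm, Real.mul_self_sqrt]

lemma trace_eq_sum_eig {n : Type*} [Fintype n] [DecidableEq n] {σ : Matrix n n ℂ}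
    (hσ : σ.IsHermitian) : σ.trace = ∑ j, (hσ.eigenvalues j : ℂ) := by
  conv_lhs => rw [hσ.spectral_theorem]
  rw [Unitary.conjStarAlgAut_apply]
  rw [Matrix.trace_mul_cycle]
  rw [show (star (hσ.eigenvectorUnitary : Matrix n n ℂ)) * (hσ.eigenvectorUnitary : Matrix n n ℂ) = 1
    from Matrix.mem_unitaryGroup_iff'.mp hσ.eigenvectorUnitary.2, one_mul, trace_diagonal]
  rfl

lemma quad_re_le_one {n : Type*} [Fintype n] [DecidableEq n] {σ : Matrix n n ℂ}
    (hσ : σ.PosSemidef) (ht : σ.trace = 1) {x : n → ℂ} (hx : star x ⬝ᵥ x = 1) :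
    (star x ⬝ᵥ σ *ᵥ x).re ≤ 1 := by
  have hH := hσ.isHermitian
  set W : Matrix n n ℂ := (hH.eigenvectorUnitary : Matrix n n ℂ) with hWdef
  have hW1 : W * Wᴴ = 1 := by
    rw [← Matrix.star_eq_conjTranspose]
    exact Matrix.mem_unitaryGroup_iff.mp hH.eigenvectorUnitary.2
  set y := Wᴴ *ᵥ x with hy
  have hspec : σ = (Wᴴ)ᴴ * diagonal (Complex.ofReal ∘ hH.eigenvalues) * Wᴴ := by
    rw [conjTranspose_conjTranspose]
    conv_lhs => rw [hH.spectral_theorem]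
    rw [Unitary.conjStarAlgAut_apply]
    rw [Matrix.star_eq_conjTranspose]
    rfl
  have hyn : star y ⬝ᵥ y = 1 := by
    have h2 : star x ⬝ᵥ ((Wᴴ)ᴴ * 1 * Wᴴ) *ᵥ x = star y ⬝ᵥ y := by
      rw [quad_conj, one_mulVec]
    rw [← h2, conjTranspose_conjTranspose, mul_one, hW1, one_mulVec, hx]
  have hyn' : ∑ j, Complex.normSq (y j) = 1 := by
    have := congrArg Complex.re hyn
    simpa [dotProduct, Complex.normSq, Complex.mul_re] using this
  have hval : (star x ⬝ᵥ σ *ᵥ x).re = ∑ j, hH.eigenvalues j * Complex.normSq (y j) := by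
    conv_lhs => rw [hspec]
    rw [quad_conj, ← hy, dotProduct, Complex.re_sum]
    refine Finset.sum_congr rfl fun j _ => ?_
    have h3 : (Wᴴ *ᵥ x) j = y j := by rw [hy]
    simp only [mulVec_diagonal, Pi.star_apply, Function.comp_apply, h3]
    have h4 : star (y j) * ((hH.eigenvalues j : ℝ) * y j : ℂ) =
        ((hH.eigenvalues j : ℝ) : ℂ) * (star (y j) * y j) := by ring
    rw [h4]
    rw [show (star (y j) * y j) = ((Complex.normSq (y j) : ℝ) : ℂ) by
      rw [Complex.star_def, mul_comm, Complex.mul_conj]]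
    rw [← Complex.ofReal_mul, Complex.ofReal_re]
  have hsum : ∑ j, hH.eigenvalues j = 1 := by
    have h5 : (↑(∑ j, hH.eigenvalues j) : ℂ) = 1 := by
      push_cast
      rw [← trace_eq_sum_eig hH, ht]
    exact_mod_cast h5
  rw [hval]
  calc ∑ j, hH.eigenvalues j * Complex.normSq (y j)
      ≤ ∑ j, hH.eigenvalues j * 1 := by
        refine Finset.sum_le_sum fun j _ => ?_
        refine mul_le_mul_of_nonneg_left ?_ (hσ.eigenvalues_nonneg j)
        calc Complex.normSq (y j) ≤ ∑ k, Complex.normSq (y k) :=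
              Finset.single_le_sum (fun k _ => Complex.normSq_nonneg _) (Finset.mem_univ j)
          _ = 1 := hyn'
    _ = 1 := by simp [hsum]

/-- Orthonormal basis of `ℂ² ⊗ ℂ²` whose `(0,0)` column is `|ψ⁺⟩`. -/
noncomputable def baseB : Matrix (Fin 2 × Fin 2) (Fin 2 × Fin 2) ℂ := fun q p =>
  if p = ((0:Fin 2),(0:Fin 2)) then psiPlus 2 q
  else if p = (1,1) then
    (if q = ((0:Fin 2),(0:Fin 2)) then (((Real.sqrt 2)⁻¹:ℝ):ℂ)
     else if q = ((1:Fin 2),(1:Fin 2)) then -(((Real.sqrt 2)⁻¹:ℝ):ℂ) else 0)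
  else if q = p then 1 else 0

lemma baseB_mem : baseB ∈ Matrix.unitaryGroup (Fin 2 × Fin 2) ℂ := by
  rw [Matrix.mem_unitaryGroup_iff']
  ext ⟨p1,p2⟩ ⟨q1,q2⟩
  fin_cases p1 <;> fin_cases p2 <;> fin_cases q1 <;> fin_cases q2 <;>
    simp [Matrix.mul_apply, Fintype.sum_prod_type, Fin.sum_univ_two, baseB, psiPlus,
      Matrix.one_apply, Prod.ext_iff, Complex.ext_iff] <;>
    norm_num [div_mul_div_comm, Real.mul_self_sqrt]

/-- A two-qubit density matrix with purity exceeding `1/2` has largest eigenvalue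
exceeding `1/2` and consequently does not lie in `𝔄𝔉₂`. -/
theorem not_absFEF_of_purity_gt (ρ : Matrix (Fin 2 × Fin 2) (Fin 2 × Fin 2) ℂ)
    (hρ : IsDensityMatrix ρ) (hpur : 1/2 < ((ρ * ρ).trace).re) :
    (∃ i, 1/2 < hρ.1.isHermitian.eigenvalues i) ∧ ¬ AbsFEF 2 ρ := by
  have hH := hρ.1.isHermitian
  have hspec : ρ = (hH.eigenvectorUnitary : Matrix (Fin 2 × Fin 2) (Fin 2 × Fin 2) ℂ) *
      diagonal (Complex.ofReal ∘ hH.eigenvalues) *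
      (hH.eigenvectorUnitary : Matrix (Fin 2 × Fin 2) (Fin 2 × Fin 2) ℂ)ᴴ := by
    conv_lhs => rw [hH.spectral_theorem]
    rw [Unitary.conjStarAlgAut_apply]
    rw [Matrix.star_eq_conjTranspose]
    rfl
  set lam := hH.eigenvalues with hlamdef
  set W : Matrix (Fin 2 × Fin 2) (Fin 2 × Fin 2) ℂ :=
    (hH.eigenvectorUnitary : Matrix (Fin 2 × Fin 2) (Fin 2 × Fin 2) ℂ) with hWdef
  set D : Matrix (Fin 2 × Fin 2) (Fin 2 × Fin 2) ℂ := diagonal (Complex.ofReal ∘ lam) with hDdef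
  have hW1 : W * Wᴴ = 1 := by
    rw [← Matrix.star_eq_conjTranspose]
    exact Matrix.mem_unitaryGroup_iff.mp hH.eigenvectorUnitary.2
  have hW2 : Wᴴ * W = 1 := by
    rw [← Matrix.star_eq_conjTranspose]
    exact Matrix.mem_unitaryGroup_iff'.mp hH.eigenvectorUnitary.2
  -- sum of eigenvalues is 1
  have hsum : ∑ j, lam j = 1 := by
    have h5 : (↑(∑ j, lam j) : ℂ) = 1 := by
      push_cast
      rw [← trace_eq_sum_eig hH, hρ.2]
    exact_mod_cast h5
  -- sum of squares exceeds 1/2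
  have h6 : ρ * ρ = W * (D * D) * Wᴴ := by
    conv_lhs => rw [hspec]
    simp only [Matrix.mul_assoc]
    rw [← Matrix.mul_assoc Wᴴ W (D * Wᴴ), hW2, Matrix.one_mul]
  have hsq : 1/2 < ∑ j, lam j * lam j := by
    have h7 : (ρ * ρ).trace = ∑ j, ((lam j : ℂ) * lam j) := by
      rw [h6, Matrix.trace_mul_cycle, hW2, Matrix.one_mul, hDdef,
        diagonal_mul_diagonal, trace_diagonal]
      rfl
    have h8 : ((ρ * ρ).trace).re = ∑ j, lam j * lam j := by
      rw [h7, Complex.re_sum]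
      refine Finset.sum_congr rfl fun j _ => ?_
      rw [← Complex.ofReal_mul, Complex.ofReal_re]
    linarith [hpur, h8.symm.le, h8.le]
  -- existence of large eigenvalue
  have hex : ∃ i, 1/2 < lam i := by
    by_contra h
    push_neg at h
    have : ∑ j, lam j * lam j ≤ ∑ j, lam j * (1/2) := by
      refine Finset.sum_le_sum fun j _ => ?_
      exact mul_le_mul_of_nonneg_left (h j) (hρ.1.eigenvalues_nonneg j)
    rw [← Finset.sum_mul, hsum, one_mul] at this
    linarith
  obtain ⟨i, hi⟩ := hex
  refine ⟨⟨i, hi⟩, ?_⟩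
  intro hAbs
  -- the permuted basis matrix
  set e : Equiv.Perm (Fin 2 × Fin 2) := Equiv.swap (((0:Fin 2),(0:Fin 2))) i with hedef
  set B : Matrix (Fin 2 × Fin 2) (Fin 2 × Fin 2) ℂ :=
    Matrix.of (fun q p => baseB q (e p)) with hBdef
  have hB2 : Bᴴ * B = 1 := by
    have h0 : baseBᴴ * baseB = 1 := by
      rw [← Matrix.star_eq_conjTranspose]
      exact Matrix.mem_unitaryGroup_iff'.mp baseB_mem
    ext p q
    have h1 := congrFun (congrFun h0 (e p)) (e q)
    simp only [Matrix.mul_apply, conjTranspose_apply, Matrix.one_apply] at h1 ⊢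
    simpa [hBdef, EmbeddingLike.apply_eq_iff_eq] using h1
  have hBmem : B ∈ Matrix.unitaryGroup (Fin 2 × Fin 2) ℂ := by
    rw [Matrix.mem_unitaryGroup_iff', Matrix.star_eq_conjTranspose]
    exact hB2
  set U : Matrix (Fin 2 × Fin 2) (Fin 2 × Fin 2) ℂ := B * Wᴴ with hUdef
  have hUmem : U ∈ Matrix.unitaryGroup (Fin 2 × Fin 2) ℂ := by
    refine mul_mem hBmem ?_
    rw [← Matrix.star_eq_conjTranspose]
    exact Unitary.star_mem hH.eigenvectorUnitary.2
  have hU2 : Uᴴ * U = 1 := by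
    rw [← Matrix.star_eq_conjTranspose]
    exact Matrix.mem_unitaryGroup_iff'.mp hUmem
  -- the conjugated state
  have hσeq : U * ρ * Uᴴ = B * D * Bᴴ := by
    conv_lhs => rw [hspec]
    rw [hUdef, conjTranspose_mul, conjTranspose_conjTranspose]
    simp only [Matrix.mul_assoc]
    rw [← Matrix.mul_assoc Wᴴ W (D * (Wᴴ * (W * Bᴴ))), hW2, Matrix.one_mul,
      ← Matrix.mul_assoc Wᴴ W Bᴴ, hW2, Matrix.one_mul]
  have hσpsd : (U * ρ * Uᴴ).PosSemidef := hρ.1.mul_mul_conjTranspose_same U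
  have hσtr : (U * ρ * Uᴴ).trace = 1 := by
    rw [Matrix.trace_mul_cycle, hU2, Matrix.one_mul, hρ.2]
  -- column i of B is psiPlus 2
  have hcol : B *ᵥ Pi.single i 1 = psiPlus 2 := by
    ext q
    simp only [hBdef, mulVec_single, Matrix.of_apply, mul_one, hedef,
      Equiv.swap_apply_right]
    simp [baseB]
  have hBψ : Bᴴ *ᵥ psiPlus 2 = Pi.single i 1 := by
    rw [← hcol, mulVec_mulVec, hB2, one_mulVec]
  -- value of the fef summand at V = 1
  have hval1 : (star (psiPlus 2) ⬝ᵥ (B * D * Bᴴ) *ᵥ psiPlus 2).re = lam i := by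
    rw [show B * D * Bᴴ = (Bᴴ)ᴴ * D * Bᴴ by rw [conjTranspose_conjTranspose]]
    rw [quad_conj, hBψ]
    simp [dotProduct, Pi.single_apply, mulVec_diagonal, hDdef, Finset.sum_ite_eq']
  -- boundedness of the fef family
  have hterm : ∀ V : Matrix.unitaryGroup (Fin 2) ℂ,
      (star (psiPlus 2) ⬝ᵥ
        ((((1 : Matrix (Fin 2) (Fin 2) ℂ) ⊗ₖ (V : Matrix (Fin 2) (Fin 2) ℂ))ᴴ * (U * ρ * Uᴴ) *
          ((1 : Matrix (Fin 2) (Fin 2) ℂ) ⊗ₖ (V : Matrix (Fin 2) (Fin 2) ℂ))) *ᵥ psiPlus 2)).re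
        ≤ 1 := by
    intro V
    set M : Matrix (Fin 2 × Fin 2) (Fin 2 × Fin 2) ℂ :=
      (1 : Matrix (Fin 2) (Fin 2) ℂ) ⊗ₖ (V : Matrix (Fin 2) (Fin 2) ℂ) with hMdef
    have hMM : Mᴴ * M = 1 := by
      rw [hMdef, kron_conjT, ← mul_kronecker_mul, conjTranspose_one, Matrix.one_mul]
      rw [show (V : Matrix (Fin 2) (Fin 2) ℂ)ᴴ * (V : Matrix (Fin 2) (Fin 2) ℂ) = 1 by
        rw [← Matrix.star_eq_conjTranspose]
        exact Matrix.mem_unitaryGroup_iff'.mp V.2]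
      exact one_kronecker_one
    have hx : star (M *ᵥ psiPlus 2) ⬝ᵥ (M *ᵥ psiPlus 2) = 1 := by
      have h := quad_conj M 1 (psiPlus 2)
      rw [Matrix.mul_one, hMM, one_mulVec, one_mulVec] at h
      rw [← h, psi_norm]
    rw [quad_conj]
    exact quad_re_le_one hσpsd hσtr hx
  have hbdd : BddAbove (Set.range fun V : Matrix.unitaryGroup (Fin 2) ℂ =>
      (star (psiPlus 2) ⬝ᵥ
        ((((1 : Matrix (Fin 2) (Fin 2) ℂ) ⊗ₖ (V : Matrix (Fin 2) (Fin 2) ℂ))ᴴ * (U * ρ * Uᴴ) *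
          ((1 : Matrix (Fin 2) (Fin 2) ℂ) ⊗ₖ (V : Matrix (Fin 2) (Fin 2) ℂ))) *ᵥ psiPlus 2)).re) := by
    refine ⟨1, ?_⟩
    rintro r ⟨V, rfl⟩
    exact hterm V
  -- lower bound on fef via V = 1
  have hval1' : (star (psiPlus 2) ⬝ᵥ
      ((((1 : Matrix (Fin 2) (Fin 2) ℂ) ⊗ₖ
          (((1 : Matrix.unitaryGroup (Fin 2) ℂ) : Matrix (Fin 2) (Fin 2) ℂ)))ᴴ * (U * ρ * Uᴴ) *
        ((1 : Matrix (Fin 2) (Fin 2) ℂ) ⊗ₖ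
          (((1 : Matrix.unitaryGroup (Fin 2) ℂ) : Matrix (Fin 2) (Fin 2) ℂ)))) *ᵥ psiPlus 2)).re
      = lam i := by
    rw [Matrix.UnitaryGroup.one_val, one_kronecker_one, conjTranspose_one, Matrix.one_mul,
      Matrix.mul_one, hσeq, hval1]
  have hge : lam i ≤ fef 2 (U * ρ * Uᴴ) := by
    rw [fef, ← hval1']
    exact le_ciSup hbdd (1 : Matrix.unitaryGroup (Fin 2) ℂ)
  have hle := hAbs U hUmem
  push_cast at hle
  linarith [hge, hi, hle]
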